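/- Under the assumptions of the linear PDE model (f ∈ C^1 positive with f(0) > 0, ∫_0^1 1/f < ∞, ∫_0^1 (g+f')/f < ∞, f_0, g_0 ≥ 0, ρ_0^{in} > 0), let η > 0 and let ε > 0 be small enough that t > ∫_0^x ε/f(y) dy for all t > η and x ∈ (0,1). Then sup_{t > η} sup_{x ∈ (0,1)} | ρ^ε(t,x) - ρ̄(t,x) | ≤ (f_0/f(0)) ρ_0^{in} ( sup_{x ∈ (0,1)} exp( -∫_0^x (g(y)+f'(y))/f(y) dy ) ) ( exp( (f_0+g_0) ε ∫_0^1 1/f(y) dy ) - 1 ), and the right-hand side tends to 0 as ε → 0. -/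

import Mathlib

set_option autoImplicit false

open MeasureTheory Filter

/-- quantitative uniform bound between the characteristic solution of the
rescaled linear PDE model (past the initial layer) and the limit density, and vanishing
of this bound as `ε → 0`. -/
theorem stmt13
    (f g : ℝ → ℝ) (f0 g0 ρ0in : ℝ)
    (hf0 : 0 ≤ f0) (hg0 : 0 ≤ g0) (hρ0in : 0 < ρ0in)
    (hfC1 : ContDiffOn ℝ 1 f (Set.Ioo 0 1))
    (hfpos : ∀ x ∈ Set.Ioo (0 : ℝ) 1, 0 < f x) (hfzero : 0 < f 0)
    (hint1 : IntervalIntegrable (fun x => 1 / f x) volume 0 1)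
    (hint2 : IntervalIntegrable (fun x => (g x + deriv f x) / f x) volume 0 1)
    (η ε : ℝ) (hη : 0 < η) (hε : 0 < ε)
    -- ε is small enough that every (t,x) with t > η lies past the initial layer
    (hsmall : ∀ t : ℝ, η < t → ∀ x ∈ Set.Ioo (0 : ℝ) 1,
      (∫ y in (0 : ℝ)..x, ε / f y) < t)
    -- the characteristic solution past the initial layer
    (ρε : ℝ → ℝ → ℝ)
    (hρε : ∀ t x : ℝ, ρε t x = (f0 / f 0) * ρ0in
      * Real.exp (-(f0 + g0) * (t - ∫ y in (0 : ℝ)..x, ε / f y))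
      * Real.exp (-∫ y in (0 : ℝ)..x, (g y + deriv f y) / f y))
    -- the limit-model density
    (ρbar : ℝ → ℝ → ℝ)
    (hρbar : ∀ t x : ℝ, ρbar t x = (f0 / f 0) * ρ0in * Real.exp (-(f0 + g0) * t)
      * Real.exp (-∫ y in (0 : ℝ)..x, (g y + deriv f y) / f y)) :
    -- the uniform bound
    (∀ t : ℝ, η < t → ∀ x ∈ Set.Ioo (0 : ℝ) 1,
      |ρε t x - ρbar t x| ≤ (f0 / f 0) * ρ0in
        * (⨆ x' ∈ Set.Ioo (0 : ℝ) 1,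
            Real.exp (-∫ y in (0 : ℝ)..x', (g y + deriv f y) / f y))
        * (Real.exp ((f0 + g0) * ε * ∫ y in (0 : ℝ)..1, 1 / f y) - 1)) ∧
    -- and the right-hand side tends to 0 as ε → 0
    Tendsto (fun ε' : ℝ => (f0 / f 0) * ρ0in
        * (⨆ x' ∈ Set.Ioo (0 : ℝ) 1,
            Real.exp (-∫ y in (0 : ℝ)..x', (g y + deriv f y) / f y))
        * (Real.exp ((f0 + g0) * ε' * ∫ y in (0 : ℝ)..1, 1 / f y) - 1))
      (nhdsWithin 0 (Set.Ioi 0)) (nhds 0) := by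
  set C : ℝ := (f0 / f 0) * ρ0in with hC
  set a : ℝ := f0 + g0 with ha
  set J : ℝ := ∫ y in (0 : ℝ)..1, 1 / f y with hJ
  set F : ℝ → ℝ :=
    fun x => Real.exp (-∫ y in (0 : ℝ)..x, (g y + deriv f y) / f y) with hF
  set S : ℝ := ⨆ x' ∈ Set.Ioo (0 : ℝ) 1, F x' with hS
  have hC0 : 0 ≤ C := mul_nonneg (div_nonneg hf0 hfzero.le) hρ0in.le
  have ha0 : 0 ≤ a := add_nonneg hf0 hg0
  -- a.e. nonnegativity of 1/f on Ioc 0 1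
  have hne1 : ∀ᵐ y : ℝ ∂volume, y ≠ 1 := by
    refine ae_iff.mpr ?_
    simp only [ne_eq, not_not]
    simpa using Real.volume_singleton (a := (1 : ℝ))
  have hae : ∀ᵐ y ∂(volume.restrict (Set.Ioc (0 : ℝ) 1)), 0 ≤ 1 / f y := by
    rw [MeasureTheory.ae_restrict_iff' measurableSet_Ioc]
    filter_upwards [hne1] with y hy1 hy
    have : y ∈ Set.Ioo (0 : ℝ) 1 := ⟨hy.1, lt_of_le_of_ne hy.2 hy1⟩
    exact div_nonneg zero_le_one (hfpos y this).le
  have hJ0 : 0 ≤ J := by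
    rw [hJ]
    calc (0 : ℝ) = ∫ y in (0 : ℝ)..(0 : ℝ), 1 / f y := by simp
    _ ≤ ∫ y in (0 : ℝ)..1, 1 / f y :=
        intervalIntegral.integral_mono_interval le_rfl le_rfl zero_le_one hae hint1
  -- boundedness and positivity of the sup
  have hFcont : ContinuousOn F (Set.Icc 0 1) := by
    have h1 : ContinuousOn (fun x => ∫ y in (0 : ℝ)..x, (g y + deriv f y) / f y)
        (Set.uIcc (0 : ℝ) 1) :=
      intervalIntegral.continuousOn_primitive_interval' hint2 Set.left_mem_uIcc
    rw [Set.uIcc_of_le zero_le_one] at h1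
    exact Real.continuous_exp.comp_continuousOn h1.neg
  have hbdd : BddAbove (F '' Set.Ioo 0 1) := by
    have := (isCompact_Icc.image_of_continuousOn hFcont).bddAbove
    exact this.mono (Set.image_mono (f := F) Set.Ioo_subset_Icc_self)
  have hbdd' : BddAbove (Set.range fun i : Set.Ioo (0 : ℝ) 1 => F i) := by
    rwa [Set.image_eq_range] at hbdd
  haveI hne : Nonempty (Set.Ioo (0 : ℝ) 1) := ⟨⟨1/2, by norm_num⟩⟩
  have hpos : (0 : ℝ) < ⨆ i : Set.Ioo (0 : ℝ) 1, F i :=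
    lt_of_lt_of_le (Real.exp_pos _) (le_ciSup hbdd' ⟨1/2, by norm_num⟩)
  have hSsub : S = ⨆ i : Set.Ioo (0 : ℝ) 1, F i := by
    rw [hS]
    exact (ciSup_subtype hbdd' (by rw [Real.sSup_empty]; exact hpos.le)).symm
  have hFleS : ∀ x ∈ Set.Ioo (0 : ℝ) 1, F x ≤ S := fun x hx =>
    (le_ciSup_set hbdd hx).trans_eq hSsub.symm
  constructor
  · intro t ht x hx
    have hKint : IntervalIntegrable (fun y => 1 / f y) volume 0 x := by
      apply hint1.mono_set
      rw [Set.uIcc_of_le hx.1.le, Set.uIcc_of_le zero_le_one]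
      exact Set.Icc_subset_Icc le_rfl hx.2.le
    have hKnonneg : 0 ≤ ∫ y in (0 : ℝ)..x, 1 / f y := by
      calc (0 : ℝ) = ∫ y in (0 : ℝ)..(0 : ℝ), 1 / f y := by simp
      _ ≤ ∫ y in (0 : ℝ)..x, 1 / f y :=
          intervalIntegral.integral_mono_interval le_rfl le_rfl hx.1.le
            (ae_restrict_of_ae_restrict_of_subset (Set.Ioc_subset_Ioc le_rfl hx.2.le) hae)
            hKint
    have hKleJ : (∫ y in (0 : ℝ)..x, 1 / f y) ≤ J :=
      intervalIntegral.integral_mono_interval le_rfl hx.1.le hx.2.le hae hint1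
    have hIeq : (∫ y in (0 : ℝ)..x, ε / f y) = ε * ∫ y in (0 : ℝ)..x, 1 / f y := by
      rw [← intervalIntegral.integral_const_mul]
      congr 1; ext y; ring
    set I : ℝ := ∫ y in (0 : ℝ)..x, ε / f y with hI
    have hI0 : 0 ≤ I := by rw [hIeq]; exact mul_nonneg hε.le hKnonneg
    have hIle : I ≤ ε * J := by
      rw [hIeq]; exact mul_le_mul_of_nonneg_left hKleJ hε.le
    have ht0 : 0 ≤ t := le_trans hη.le ht.le
    have hdiff : ρε t x - ρbar t x
        = C * F x * Real.exp (-a * t) * (Real.exp (a * I) - 1) := by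
      simp only [hρε, hρbar, hF, hI]
      rw [show -a * (t - ∫ y in (0 : ℝ)..x, ε / f y)
          = -a * t + a * ∫ y in (0 : ℝ)..x, ε / f y by ring, Real.exp_add]
      ring
    have h1 : (1 : ℝ) ≤ Real.exp (a * I) := Real.one_le_exp (mul_nonneg ha0 hI0)
    have hFx : (0 : ℝ) < F x := Real.exp_pos _
    rw [hdiff, abs_of_nonneg]
    · calc C * F x * Real.exp (-a * t) * (Real.exp (a * I) - 1)
          ≤ C * S * 1 * (Real.exp (a * (ε * J)) - 1) := by
            apply mul_le_mul
            · apply mul_le_mul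
              · exact mul_le_mul_of_nonneg_left (hFleS x hx) hC0
              · exact Real.exp_le_one_iff.mpr (by nlinarith)
              · positivity
              · exact mul_nonneg hC0 (hFx.le.trans (hFleS x hx))
            · have : a * I ≤ a * (ε * J) := mul_le_mul_of_nonneg_left hIle ha0
              linarith [Real.exp_le_exp.mpr this]
            · linarith
            · exact mul_nonneg (mul_nonneg hC0 (hFx.le.trans (hFleS x hx))) zero_le_one
      _ = C * S * (Real.exp (a * ε * J) - 1) := by ring_nf
    · have h2 : (0 : ℝ) ≤ Real.exp (a * I) - 1 := by linarith
      have h3 : (0 : ℝ) ≤ Real.exp (-a * t) := (Real.exp_pos _).le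
      exact mul_nonneg (mul_nonneg (mul_nonneg hC0 hFx.le) h3) h2
  · have hcont : Continuous (fun ε' : ℝ => C * S * (Real.exp (a * ε' * J) - 1)) := by
      apply continuous_const.mul
      apply Continuous.sub _ continuous_const
      exact Real.continuous_exp.comp (by fun_prop)
    have h0 : C * S * (Real.exp (a * (0 : ℝ) * J) - 1) = 0 := by simp
    have h := hcont.tendsto 0
    rw [h0] at h
    exact h.mono_left nhdsWithin_le_nhds
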